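/- arXiv:1504.06830 — 2 statements merged into one kernel-verified Lean document; each statement's English description precedes it below -/
import Mathlib

section
/- For discrete random variables A, B, C, D on the same probability space, if A and D are conditionally independent given C, then I(A;B|C) ≤ I(A;B|C,D). -/
open scoped Classical BigOperators
noncomputable section

/-- Probability of an event under a discrete distribution `μ` on a finite sample space. -/
def pr {Ω : Type*} [Fintype Ω] (μ : Ω → ℝ) (p : Ω → Prop) : ℝ :=
  ∑ ω, if p ω then μ ω else 0

/-- The distribution (pmf) of a random variable `A` under `μ`. -/
def dist {Ω α : Type*} [Fintype Ω] [Fintype α] (μ : Ω → ℝ) (A : Ω → α) : α → ℝ :=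
  fun a => pr μ (fun ω => A ω = a)

/-- Shannon entropy (in bits) of a random variable `A` under `μ`. -/
def ent {Ω α : Type*} [Fintype Ω] [Fintype α] (μ : Ω → ℝ) (A : Ω → α) : ℝ :=
  ∑ a, -(dist μ A a * Real.logb 2 (dist μ A a))

/-- Conditional entropy `H(A|B)` (in bits). -/
def condEnt {Ω α β : Type*} [Fintype Ω] [Fintype α] [Fintype β]
    (μ : Ω → ℝ) (A : Ω → α) (B : Ω → β) : ℝ :=
  ent μ (fun ω => (A ω, B ω)) - ent μ B

/-- Conditional mutual information `I(A;B|C)` (in bits). -/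
def condMI {Ω α β γ : Type*} [Fintype Ω] [Fintype α] [Fintype β] [Fintype γ]
    (μ : Ω → ℝ) (A : Ω → α) (B : Ω → β) (C : Ω → γ) : ℝ :=
  condEnt μ A C - condEnt μ A (fun ω => (B ω, C ω))

/-- Mutual information `I(A;B)` (in bits). -/
def mutualInfo {Ω α β : Type*} [Fintype Ω] [Fintype α] [Fintype β]
    (μ : Ω → ℝ) (A : Ω → α) (B : Ω → β) : ℝ :=
  ent μ A - condEnt μ A B

/-- Kullback-Leibler divergence `D(p‖q)` in bits. -/
def kl {α : Type*} [Fintype α] (p q : α → ℝ) : ℝ :=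
  ∑ x, p x * Real.logb 2 (p x / q x)

/-- Kullback-Leibler divergence `D(p‖q)` in nats. -/
def klNat {α : Type*} [Fintype α] (p q : α → ℝ) : ℝ :=
  ∑ x, p x * Real.log (p x / q x)

section lemmas
variable {Ω α β γ : Type*} [Fintype Ω] [Fintype α] [Fintype β] [Fintype γ]

lemma pr_congr (μ : Ω → ℝ) {p q : Ω → Prop} (h : ∀ ω, p ω ↔ q ω) : pr μ p = pr μ q :=
  Finset.sum_congr rfl fun ω _ => by simp [h ω]

lemma pr_nonneg (μ : Ω → ℝ) (hμ0 : ∀ ω, 0 ≤ μ ω) (p : Ω → Prop) : 0 ≤ pr μ p := by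
  unfold pr; exact Finset.sum_nonneg fun ω _ => by by_cases h : p ω <;> simp [h, hμ0 ω]

lemma pr_sum (μ : Ω → ℝ) (g : Ω → β) (p : Ω → Prop) :
    pr μ p = ∑ b, pr μ (fun ω => p ω ∧ g ω = b) := by
  unfold pr
  rw [Finset.sum_comm]
  refine Finset.sum_congr rfl fun ω _ => ?_
  by_cases h : p ω <;> simp [h]

lemma dist_nonneg' (μ : Ω → ℝ) (hμ0 : ∀ ω, 0 ≤ μ ω) (X : Ω → α) (a : α) : 0 ≤ dist μ X a :=
  pr_nonneg μ hμ0 _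

lemma dist_sum_one (μ : Ω → ℝ) (hμ1 : ∑ ω, μ ω = 1) (X : Ω → α) : ∑ a, dist μ X a = 1 := by
  unfold _root_.dist pr
  rw [Finset.sum_comm, ← hμ1]
  exact Finset.sum_congr rfl fun ω _ => by simp

lemma dist_comp_equiv (μ : Ω → ℝ) (X : Ω → α) (e : α ≃ β) (b : β) :
    dist μ (fun ω => e (X ω)) b = dist μ X (e.symm b) :=
  pr_congr μ fun ω => by rw [← Equiv.eq_symm_apply]

lemma ent_comp_equiv (μ : Ω → ℝ) (X : Ω → α) (e : α ≃ β) :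
    ent μ (fun ω => e (X ω)) = ent μ X := by
  unfold ent
  simp only [dist_comp_equiv]
  exact Equiv.sum_comp e.symm (fun a => -(dist μ X a * Real.logb 2 (dist μ X a)))

lemma dist_pair_snd (μ : Ω → ℝ) (X : Ω → α) (W : Ω → β) (w : β) :
    dist μ W w = ∑ a, dist μ (fun ω => (X ω, W ω)) (a, w) := by
  unfold _root_.dist
  rw [pr_sum μ X]
  exact Finset.sum_congr rfl fun a _ => pr_congr μ fun ω => by
    simp only [Prod.mk.injEq]; tauto

lemma dist_marg (μ : Ω → ℝ) (X : Ω → α) (Y : Ω → β) (Z : Ω → γ) (a : α) (c : γ) :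
    dist μ (fun ω => (X ω, Z ω)) (a, c)
      = ∑ b, dist μ (fun ω => (X ω, (Y ω, Z ω))) (a, (b, c)) := by
  unfold _root_.dist
  rw [pr_sum μ Y]
  exact Finset.sum_congr rfl fun b _ => pr_congr μ fun ω => by
    simp only [Prod.mk.injEq]; tauto

lemma sum_rev3 (f : α → β → γ → ℝ) :
    ∑ a, ∑ b, ∑ c, f a b c = ∑ c, ∑ b, ∑ a, f a b c :=
  calc ∑ a, ∑ b, ∑ c, f a b c
      = ∑ b, ∑ a, ∑ c, f a b c := Finset.sum_comm
    _ = ∑ b, ∑ c, ∑ a, f a b c := Finset.sum_congr rfl fun _ _ => Finset.sum_comm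
    _ = ∑ c, ∑ b, ∑ a, f a b c := Finset.sum_comm

lemma condMI_nonneg (μ : Ω → ℝ) (hμ0 : ∀ ω, 0 ≤ μ ω) (hμ1 : ∑ ω, μ ω = 1)
    (X : Ω → α) (Y : Ω → β) (Z : Ω → γ) : 0 ≤ condMI μ X Y Z := by
  classical
  -- abbreviations (plain functions, definitional)
  let J : α → β → γ → ℝ := fun a b c => dist μ (fun ω => (X ω, (Y ω, Z ω))) (a, (b, c))
  have hJ0 : ∀ a b c, 0 ≤ J a b c := fun a b c => dist_nonneg' μ hμ0 _ _
  -- marginal identities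
  have hXZm : ∀ a c, dist μ (fun ω => (X ω, Z ω)) (a, c) = ∑ b, J a b c :=
    fun a c => dist_marg μ X Y Z a c
  have hYZm : ∀ b c, dist μ (fun ω => (Y ω, Z ω)) (b, c) = ∑ a, J a b c :=
    fun b c => dist_pair_snd μ X (fun ω => (Y ω, Z ω)) (b, c)
  have hZm : ∀ c, dist μ Z c = ∑ b, ∑ a, J a b c := by
    intro c
    rw [dist_pair_snd μ Y Z c]
    exact Finset.sum_congr rfl fun b _ => hYZm b c
  have hXZ0 : ∀ a c, 0 ≤ dist μ (fun ω => (X ω, Z ω)) (a, c) := fun a c => dist_nonneg' μ hμ0 _ _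
  have hYZ0 : ∀ b c, 0 ≤ dist μ (fun ω => (Y ω, Z ω)) (b, c) := fun b c => dist_nonneg' μ hμ0 _ _
  have hZ0 : ∀ c, 0 ≤ dist μ Z c := fun c => dist_nonneg' μ hμ0 _ _
  -- total mass
  have hsumJ : ∑ a, ∑ b, ∑ c, J a b c = 1 := by
    have := dist_sum_one μ hμ1 (fun ω => (X ω, (Y ω, Z ω)))
    simpa only [Fintype.sum_prod_type] using this
  -- entropy expansions
  have hEJ : ent μ (fun ω => (X ω, (Y ω, Z ω)))
      = ∑ a, ∑ b, ∑ c, -(J a b c * Real.logb 2 (J a b c)) := by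
    unfold ent
    simp only [Fintype.sum_prod_type]
    rfl
  have hEXZ : ent μ (fun ω => (X ω, Z ω))
      = ∑ a, ∑ b, ∑ c, -(J a b c * Real.logb 2 (dist μ (fun ω => (X ω, Z ω)) (a, c))) := by
    unfold ent
    simp only [Fintype.sum_prod_type]
    refine Finset.sum_congr rfl fun a _ => ?_
    conv_rhs => rw [Finset.sum_comm]
    refine Finset.sum_congr rfl fun c _ => ?_
    rw [Finset.sum_neg_distrib, ← Finset.sum_mul, ← hXZm a c]
  have hEYZ : ent μ (fun ω => (Y ω, Z ω))
      = ∑ a, ∑ b, ∑ c, -(J a b c * Real.logb 2 (dist μ (fun ω => (Y ω, Z ω)) (b, c))) := by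
    unfold ent
    simp only [Fintype.sum_prod_type]
    conv_rhs => rw [Finset.sum_comm]
    refine Finset.sum_congr rfl fun b _ => ?_
    conv_rhs => rw [Finset.sum_comm]
    refine Finset.sum_congr rfl fun c _ => ?_
    rw [Finset.sum_neg_distrib, ← Finset.sum_mul, ← hYZm b c]
  have hEZ : ent μ Z
      = ∑ a, ∑ b, ∑ c, -(J a b c * Real.logb 2 (dist μ Z c)) := by
    unfold ent
    rw [sum_rev3 (fun a b c => -(J a b c * Real.logb 2 (dist μ Z c)))]
    refine Finset.sum_congr rfl fun c _ => Eq.symm ?_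
    calc ∑ b, ∑ a, -(J a b c * Real.logb 2 (dist μ Z c))
        = ∑ b, -((∑ a, J a b c) * Real.logb 2 (dist μ Z c)) :=
          Finset.sum_congr rfl fun b _ => by rw [Finset.sum_neg_distrib, ← Finset.sum_mul]
      _ = -((∑ b, ∑ a, J a b c) * Real.logb 2 (dist μ Z c)) := by
          rw [Finset.sum_neg_distrib, ← Finset.sum_mul]
      _ = -(dist μ Z c * Real.logb 2 (dist μ Z c)) := by rw [← hZm c]
  -- key identity
  have key : condMI μ X Y Z
      = ∑ a, ∑ b, ∑ c, J a b c *
          (Real.logb 2 (J a b c) + Real.logb 2 (dist μ Z c)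
            - Real.logb 2 (dist μ (fun ω => (X ω, Z ω)) (a, c))
            - Real.logb 2 (dist μ (fun ω => (Y ω, Z ω)) (b, c))) := by
    unfold condMI condEnt
    rw [hEJ, hEXZ, hEYZ, hEZ]
    simp only [mul_add, mul_sub, Finset.sum_add_distrib, Finset.sum_sub_distrib,
      Finset.sum_neg_distrib]
    ring
  -- the comparison distribution
  let Q : α → β → γ → ℝ := fun a b c =>
    dist μ (fun ω => (X ω, Z ω)) (a, c) * dist μ (fun ω => (Y ω, Z ω)) (b, c) / dist μ Z c
  have hQ0 : ∀ a b c, 0 ≤ Q a b c := fun a b c =>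
    div_nonneg (mul_nonneg (hXZ0 a c) (hYZ0 b c)) (hZ0 c)
  have hsumQ : ∑ a, ∑ b, ∑ c, Q a b c = 1 := by
    rw [sum_rev3 Q]
    have hstep : ∀ c, ∑ b, ∑ a, Q a b c = dist μ Z c := by
      intro c
      have h1 : ∑ a, dist μ (fun ω => (X ω, Z ω)) (a, c) = dist μ Z c := by
        rw [hZm c, Finset.sum_comm]
        exact Finset.sum_congr rfl fun a _ => (hXZm a c)
      have h2 : ∑ b, dist μ (fun ω => (Y ω, Z ω)) (b, c) = dist μ Z c := by
        rw [hZm c]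
        exact Finset.sum_congr rfl fun b _ => (hYZm b c)
      have h3 : ∀ b, ∑ a, Q a b c
          = dist μ Z c * dist μ (fun ω => (Y ω, Z ω)) (b, c) / dist μ Z c := by
        intro b
        show ∑ a, dist μ (fun ω => (X ω, Z ω)) (a, c)
            * dist μ (fun ω => (Y ω, Z ω)) (b, c) / dist μ Z c = _
        rw [← Finset.sum_div, ← Finset.sum_mul, h1]
      rw [Finset.sum_congr rfl fun b _ => h3 b]
      by_cases hz : dist μ Z c = 0
      · simp [hz]
      · calc ∑ b, dist μ Z c * dist μ (fun ω => (Y ω, Z ω)) (b, c) / dist μ Z c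
            = ∑ b, dist μ (fun ω => (Y ω, Z ω)) (b, c) :=
              Finset.sum_congr rfl fun b _ => mul_div_cancel_left₀ _ hz
          _ = dist μ Z c := h2
    rw [Finset.sum_congr rfl fun c _ => hstep c]
    have := dist_sum_one μ hμ1 Z
    exact this
  -- termwise bound
  have hl2 : (0:ℝ) < Real.log 2 := Real.log_pos (by norm_num)
  have hterm : ∀ a b c, (Real.log 2)⁻¹ * (J a b c - Q a b c)
      ≤ J a b c *
          (Real.logb 2 (J a b c) + Real.logb 2 (dist μ Z c)
            - Real.logb 2 (dist μ (fun ω => (X ω, Z ω)) (a, c))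
            - Real.logb 2 (dist μ (fun ω => (Y ω, Z ω)) (b, c))) := by
    intro a b c
    by_cases hJp : J a b c = 0
    · rw [hJp]
      have := hQ0 a b c
      have h := inv_nonneg.2 hl2.le
      nlinarith
    · have hJpos : 0 < J a b c := lt_of_le_of_ne (hJ0 a b c) (Ne.symm hJp)
      have h1 : 0 < dist μ (fun ω => (X ω, Z ω)) (a, c) := by
        rw [hXZm a c]
        exact lt_of_lt_of_le hJpos (Finset.single_le_sum (fun b' _ => hJ0 a b' c) (Finset.mem_univ b))
      have h2 : 0 < dist μ (fun ω => (Y ω, Z ω)) (b, c) := by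
        rw [hYZm b c]
        exact lt_of_lt_of_le hJpos (Finset.single_le_sum (fun a' _ => hJ0 a' b c) (Finset.mem_univ a))
      have h3 : 0 < dist μ Z c := by
        rw [hZm c]
        have hb : J a b c ≤ ∑ a', J a' b c :=
          Finset.single_le_sum (fun a' _ => hJ0 a' b c) (Finset.mem_univ a)
        have hbb : ∑ a', J a' b c ≤ ∑ b', ∑ a', J a' b' c :=
          Finset.single_le_sum (fun b' _ => Finset.sum_nonneg fun a' _ => hJ0 a' b' c)
            (Finset.mem_univ b)
        linarith
      have hQpos : 0 < Q a b c := div_pos (mul_pos h1 h2) h3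
      have hlog : Real.logb 2 (J a b c) + Real.logb 2 (dist μ Z c)
            - Real.logb 2 (dist μ (fun ω => (X ω, Z ω)) (a, c))
            - Real.logb 2 (dist μ (fun ω => (Y ω, Z ω)) (b, c))
          = (Real.log (J a b c) - Real.log (Q a b c)) / Real.log 2 := by
        simp only [Real.logb]
        rw [show Real.log (Q a b c)
            = Real.log (dist μ (fun ω => (X ω, Z ω)) (a, c))
              + Real.log (dist μ (fun ω => (Y ω, Z ω)) (b, c)) - Real.log (dist μ Z c) by
          rw [show Q a b c = dist μ (fun ω => (X ω, Z ω)) (a, c)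
              * dist μ (fun ω => (Y ω, Z ω)) (b, c) / dist μ Z c from rfl,
            Real.log_div (mul_pos h1 h2).ne' h3.ne', Real.log_mul h1.ne' h2.ne']]
        ring
      rw [hlog]
      have hlt : Real.log (Q a b c) - Real.log (J a b c) ≤ Q a b c / J a b c - 1 := by
        have := Real.log_le_sub_one_of_pos (div_pos hQpos hJpos)
        rwa [Real.log_div hQpos.ne' hJpos.ne'] at this
      have hdiv : J a b c * (Q a b c / J a b c) = Q a b c := by field_simp
      have hmain : J a b c - Q a b c
          ≤ J a b c * (Real.log (J a b c) - Real.log (Q a b c)) := by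
        nlinarith [mul_le_mul_of_nonneg_left hlt hJpos.le]
      calc (Real.log 2)⁻¹ * (J a b c - Q a b c)
          ≤ (Real.log 2)⁻¹ * (J a b c * (Real.log (J a b c) - Real.log (Q a b c))) :=
            mul_le_mul_of_nonneg_left hmain (inv_nonneg.2 hl2.le)
        _ = J a b c * ((Real.log (J a b c) - Real.log (Q a b c)) / Real.log 2) := by ring
  -- assemble
  have hsum_le : ∑ a, ∑ b, ∑ c, (Real.log 2)⁻¹ * (J a b c - Q a b c)
      ≤ ∑ a, ∑ b, ∑ c, J a b c *
          (Real.logb 2 (J a b c) + Real.logb 2 (dist μ Z c)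
            - Real.logb 2 (dist μ (fun ω => (X ω, Z ω)) (a, c))
            - Real.logb 2 (dist μ (fun ω => (Y ω, Z ω)) (b, c))) :=
    Finset.sum_le_sum fun a _ => Finset.sum_le_sum fun b _ => Finset.sum_le_sum fun c _ =>
      hterm a b c
  have hzero : ∑ a, ∑ b, ∑ c, (Real.log 2)⁻¹ * (J a b c - Q a b c) = 0 := by
    simp only [← Finset.mul_sum]
    simp only [Finset.sum_sub_distrib]
    rw [hsumJ, hsumQ]
    ring
  rw [key]
  linarith
end lemmas

/-- Conditioning on independent variables does not decrease information:
if `A` and `D` are conditionally independent given `C` (i.e. `I(A;D|C) = 0`),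
then `I(A;B|C) ≤ I(A;B|C,D)`. -/
theorem condMI_le_condMI_of_condIndep
    {Ω α β γ δ : Type*} [Fintype Ω] [Fintype α] [Fintype β] [Fintype γ] [Fintype δ]
    (μ : Ω → ℝ) (hμ0 : ∀ ω, 0 ≤ μ ω) (hμ1 : ∑ ω, μ ω = 1)
    (A : Ω → α) (B : Ω → β) (C : Ω → γ) (D : Ω → δ)
    (hindep : condMI μ A D C = 0) :
    condMI μ A B C ≤ condMI μ A B (fun ω => (C ω, D ω)) := by
  have h0 : 0 ≤ condMI μ A D (fun ω => (C ω, B ω)) := condMI_nonneg μ hμ0 hμ1 A D _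
  have e1 : ent μ (fun ω => (A ω, (C ω, B ω))) = ent μ (fun ω => (A ω, (B ω, C ω))) :=
    ent_comp_equiv μ (fun ω => (A ω, (B ω, C ω)))
      ⟨fun x => (x.1, (x.2.2, x.2.1)), fun x => (x.1, (x.2.2, x.2.1)), fun _ => rfl, fun _ => rfl⟩
  have e2 : ent μ (fun ω => (C ω, B ω)) = ent μ (fun ω => (B ω, C ω)) :=
    ent_comp_equiv μ (fun ω => (B ω, C ω))
      ⟨fun x => (x.2, x.1), fun x => (x.2, x.1), fun _ => rfl, fun _ => rfl⟩
  have e3 : ent μ (fun ω => (A ω, (D ω, (C ω, B ω))))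
      = ent μ (fun ω => (A ω, (B ω, (C ω, D ω)))) :=
    ent_comp_equiv μ (fun ω => (A ω, (B ω, (C ω, D ω))))
      ⟨fun x => (x.1, (x.2.2.2, (x.2.2.1, x.2.1))),
       fun x => (x.1, (x.2.2.2, (x.2.2.1, x.2.1))), fun _ => rfl, fun _ => rfl⟩
  have e4 : ent μ (fun ω => (D ω, (C ω, B ω))) = ent μ (fun ω => (B ω, (C ω, D ω))) :=
    ent_comp_equiv μ (fun ω => (B ω, (C ω, D ω)))
      ⟨fun x => (x.2.2, (x.2.1, x.1)), fun x => (x.2.2, (x.2.1, x.1)), fun _ => rfl, fun _ => rfl⟩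
  have e5 : ent μ (fun ω => (A ω, (D ω, C ω))) = ent μ (fun ω => (A ω, (C ω, D ω))) :=
    ent_comp_equiv μ (fun ω => (A ω, (C ω, D ω)))
      ⟨fun x => (x.1, (x.2.2, x.2.1)), fun x => (x.1, (x.2.2, x.2.1)), fun _ => rfl, fun _ => rfl⟩
  have e6 : ent μ (fun ω => (D ω, C ω)) = ent μ (fun ω => (C ω, D ω)) :=
    ent_comp_equiv μ (fun ω => (C ω, D ω))
      ⟨fun x => (x.2, x.1), fun x => (x.2, x.1), fun _ => rfl, fun _ => rfl⟩
  have key : condMI μ A B (fun ω => (C ω, D ω)) - condMI μ A B C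
      = condMI μ A D (fun ω => (C ω, B ω)) - condMI μ A D C := by
    unfold condMI condEnt
    rw [e1, e2, e3, e4, e5, e6]
    ring
  linarith [h0, key, hindep]
end
end

section
/- Total variation distance to a zero-information distribution does not bound information: let X be uniform on {0,1}^n and δ ∈ (0,1). Define M to equal X with probability δ and an independent uniform string with probability 1-δ (the choice made by an independent coin). Then M is δ-close in total variation to a distribution independent of X, yet I(M; X) ≥ δ·n - 1. -/
open scoped Classical BigOperators
noncomputable section

lemma dist_apply {Ω α : Type*} [Fintype Ω] [Fintype α] (μ : Ω → ℝ) (A : Ω → α) (a : α) :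
    dist μ A a = ∑ ω, if A ω = a then μ ω else 0 := rfl

lemma xlog2x_lb {x : ℝ} (hx : 0 < x) : x - 1/2 ≤ x * Real.log (2*x) := by
  have h := Real.log_le_sub_one_of_pos (x := (2*x)⁻¹) (by positivity)
  rw [Real.log_inv] at h
  have hxx : x * (2*x)⁻¹ = 1/2 := by field_simp
  nlinarith [mul_le_mul_of_nonneg_left h hx.le]

lemma binent {a : ℝ} (ha : 0 < a) (ha1 : a < 1) :
    -1 ≤ a * Real.logb 2 a + (1-a) * Real.logb 2 (1-a) := by
  have hb : 0 < 1 - a := by linarith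
  have hl2 : 0 < Real.log 2 := Real.log_pos (by norm_num)
  have h1 := xlog2x_lb ha
  have h2 := xlog2x_lb hb
  rw [Real.log_mul (by norm_num) ha.ne'] at h1
  rw [Real.log_mul (by norm_num) hb.ne'] at h2
  have key : -Real.log 2 ≤ a * Real.log a + (1-a) * Real.log (1-a) := by nlinarith
  have e : a * Real.logb 2 a + (1-a) * Real.logb 2 (1-a)
      = (a * Real.log a + (1-a) * Real.log (1-a)) / Real.log 2 := by
    simp only [Real.logb]; ring
  rw [e, le_div_iff₀ hl2]
  linarith

lemma key_ineq (n : ℕ) (δ c : ℝ) (hδ0 : 0 < δ) (hδ1 : δ < 1) (hc0 : 0 < c) (hc1 : c ≤ 1) :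
    δ*n - 1 ≤ (δ + c*(1-δ))*n + (δ + c*(1-δ)) * Real.logb 2 (δ + c*(1-δ))
      + (1-δ)*(1-c) * Real.logb 2 (1-δ) := by
  set a := δ + c*(1-δ) with ha
  have haδ : δ ≤ a := by nlinarith
  have ha1 : a ≤ 1 := by nlinarith
  have ha0 : 0 < a := by linarith
  have hn0 : (0:ℝ) ≤ n := Nat.cast_nonneg n
  have hδn : δ * n ≤ a * n := mul_le_mul_of_nonneg_right haδ hn0
  rcases eq_or_lt_of_le ha1 with h1 | h1
  · have hc : c = 1 := by nlinarith
    rw [h1, hc]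
    simp [Real.logb_one]
    nlinarith
  · have ht0 : 0 < 1 - a := by linarith
    have hta : 1 - a = (1-δ)*(1-c) := by ring
    have hmono : Real.logb 2 (1-a) ≤ Real.logb 2 (1-δ) :=
      Real.logb_le_logb_of_le (by norm_num) ht0 (by nlinarith)
    have hbe := binent ha0 h1
    have h4 : (1-a) * Real.logb 2 (1-a) ≤ (1-a) * Real.logb 2 (1-δ) :=
      mul_le_mul_of_nonneg_left hmono ht0.le
    have h5 : (1-a) * Real.logb 2 (1-δ) = (1-δ)*(1-c) * Real.logb 2 (1-δ) := by rw [hta]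
    linarith

/-- Closeness to a zero-information distribution does not bound information:
with `X` uniform on `{0,1}ⁿ`, `U` an independent uniform string, `B ~ Ber(δ)` independent,
and `M = X` if `B` else `U`, the law of `M` is `δ`-close in total variation to the
(X-independent) uniform law, yet `I(M;X) ≥ δ·n - 1` bits. -/
theorem tv_close_but_high_information (n : ℕ) (δ : ℝ) (hδ : δ ∈ Set.Ioo (0 : ℝ) 1) :
    ((1 / 2) * ∑ m : Fin n → Bool,
        |dist (fun ω : (Fin n → Bool) × (Fin n → Bool) × Bool =>
            ((1 : ℝ) / 2 ^ n) * ((1 : ℝ) / 2 ^ n) * (if ω.2.2 then δ else 1 - δ))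
          (fun ω => if ω.2.2 then ω.1 else ω.2.1) m - (1 / 2 : ℝ) ^ n| ≤ δ) ∧
    mutualInfo (fun ω : (Fin n → Bool) × (Fin n → Bool) × Bool =>
        ((1 : ℝ) / 2 ^ n) * ((1 : ℝ) / 2 ^ n) * (if ω.2.2 then δ else 1 - δ))
      (fun ω => if ω.2.2 then ω.1 else ω.2.1) (fun ω => ω.1)
      ≥ δ * n - 1 := by
  obtain ⟨hδ0, hδ1⟩ := hδ
  have h2 : (2:ℝ)^n ≠ 0 := by positivity
  set μ : (Fin n → Bool) × (Fin n → Bool) × Bool → ℝ :=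
    fun ω => ((1 : ℝ) / 2 ^ n) * ((1 : ℝ) / 2 ^ n) * (if ω.2.2 then δ else 1 - δ) with hμ
  set M : (Fin n → Bool) × (Fin n → Bool) × Bool → (Fin n → Bool) :=
    fun ω => if ω.2.2 then ω.1 else ω.2.1 with hM
  -- distribution of M is uniform
  have hdistM : ∀ m, dist μ M m = (1/2:ℝ)^n := by
    intro m
    rw [one_div_pow]
    simp only [dist_apply, hμ, hM, Fintype.sum_prod_type, Fintype.sum_bool, if_true, if_false,
      Bool.false_eq_true, ite_true, ite_false]
    simp only [Finset.sum_add_distrib, Finset.sum_ite_eq', Finset.mem_univ, if_true,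
      mul_ite, mul_zero, Finset.sum_const, Finset.card_univ, Fintype.card_fun, Fintype.card_bool, Fintype.card_fin,
      nsmul_eq_mul]
    push_cast
    field_simp
    ring
  constructor
  · have : ∀ m : Fin n → Bool,
        |dist μ M m - (1 / 2 : ℝ) ^ n| = 0 := by
      intro m; rw [hdistM m]; simp
    rw [Finset.sum_congr rfl (fun m _ => this m)]
    simp
    linarith
  · -- mutual information
    have hdistX : ∀ x, dist μ (fun ω => ω.1) x = (1:ℝ)/2^n := by
      intro x
      simp only [dist_apply, hμ, Fintype.sum_prod_type, Fintype.sum_bool, if_true, if_false,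
        Bool.false_eq_true, ite_true, ite_false]
      simp only [Finset.sum_add_distrib, Finset.sum_ite_eq', Finset.mem_univ, if_true,
        mul_ite, mul_zero, Finset.sum_const, Finset.card_univ, Fintype.card_fun, Fintype.card_bool, Fintype.card_fin,
        nsmul_eq_mul]
      push_cast
      field_simp
      ring
    have hdistMX : ∀ p : (Fin n → Bool) × (Fin n → Bool),
        dist μ (fun ω => (M ω, ω.1)) p
          = ((1:ℝ)/2^n) * ((1:ℝ)/2^n) * (1-δ) + if p.1 = p.2 then ((1:ℝ)/2^n) * δ else 0 := by
      rintro ⟨m, x⟩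
      simp only [dist_apply, hμ, hM, Fintype.sum_prod_type, Fintype.sum_bool, if_true, if_false,
        Prod.mk.injEq, ite_and, Bool.false_eq_true, ite_true, ite_false]
      by_cases hmx : m = x
      · subst hmx
        simp only [Finset.sum_ite_eq', Finset.mem_univ, if_true, Finset.sum_add_distrib, mul_ite, mul_zero, ite_true,
          Finset.sum_const, Finset.card_univ, Fintype.card_fun, Fintype.card_bool,
          Fintype.card_fin, nsmul_eq_mul]
        push_cast
        field_simp
        ring
      · simp only [Finset.sum_ite_eq', Finset.mem_univ, if_true, hmx, if_false,
          Finset.sum_add_distrib, Finset.sum_const, Finset.card_univ, Fintype.card_fun,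
          Fintype.card_bool, Fintype.card_fin, nsmul_eq_mul, Finset.sum_ite_eq,
          mul_zero, zero_mul, add_zero, zero_add, mul_ite, ite_false, ite_self]
    have hlogc : Real.logb 2 ((1:ℝ)/2^n) = -(n:ℝ) := by
      rw [one_div, Real.logb_inv, Real.logb_pow, Real.logb_self_eq_one (by norm_num)]
      ring
    have hlogc' : Real.logb 2 ((1/2:ℝ)^n) = -(n:ℝ) := by
      rw [one_div_pow]; exact hlogc
    have hentM : ent μ M = (n:ℝ) := by
      simp only [ent, hdistM, hlogc', Finset.sum_const, Finset.card_univ, Fintype.card_fun,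
        Fintype.card_bool, Fintype.card_fin, nsmul_eq_mul]
      rw [one_div_pow]
      push_cast
      field_simp
    have hentX : ent μ (fun ω => ω.1) = (n:ℝ) := by
      simp only [ent, hdistX, hlogc, Finset.sum_const, Finset.card_univ, Fintype.card_fun,
        Fintype.card_bool, Fintype.card_fin, nsmul_eq_mul]
      push_cast
      field_simp
    have hentMX : ent μ (fun ω => (M ω, ω.1))
        = 2^n * (2^n * (-((((1:ℝ)/2^n) * ((1:ℝ)/2^n) * (1-δ)) *
              Real.logb 2 (((1:ℝ)/2^n) * ((1:ℝ)/2^n) * (1-δ))))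
            + ((-((((1:ℝ)/2^n) * ((1:ℝ)/2^n) * (1-δ) + ((1:ℝ)/2^n) * δ) *
              Real.logb 2 (((1:ℝ)/2^n) * ((1:ℝ)/2^n) * (1-δ) + ((1:ℝ)/2^n) * δ)))
              - (-((((1:ℝ)/2^n) * ((1:ℝ)/2^n) * (1-δ)) *
              Real.logb 2 (((1:ℝ)/2^n) * ((1:ℝ)/2^n) * (1-δ)))))) := by
      simp only [ent, hdistMX, Fintype.sum_prod_type]
      have hsummand : ∀ m x : Fin n → Bool,
          -((((1:ℝ)/2^n) * ((1:ℝ)/2^n) * (1-δ) + if m = x then ((1:ℝ)/2^n) * δ else 0) *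
              Real.logb 2 (((1:ℝ)/2^n) * ((1:ℝ)/2^n) * (1-δ) + if m = x then ((1:ℝ)/2^n) * δ else 0))
          = -((((1:ℝ)/2^n) * ((1:ℝ)/2^n) * (1-δ)) *
              Real.logb 2 (((1:ℝ)/2^n) * ((1:ℝ)/2^n) * (1-δ)))
            + (if m = x then
                ((-((((1:ℝ)/2^n) * ((1:ℝ)/2^n) * (1-δ) + ((1:ℝ)/2^n) * δ) *
                  Real.logb 2 (((1:ℝ)/2^n) * ((1:ℝ)/2^n) * (1-δ) + ((1:ℝ)/2^n) * δ)))
                - (-((((1:ℝ)/2^n) * ((1:ℝ)/2^n) * (1-δ)) *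
                  Real.logb 2 (((1:ℝ)/2^n) * ((1:ℝ)/2^n) * (1-δ))))) else 0) := by
        intro m x
        by_cases h : m = x <;> simp [h] <;> ring
      simp only [hsummand, Finset.sum_add_distrib, Finset.sum_ite_eq, Finset.sum_ite_eq',
        Finset.mem_univ, if_true,
        Finset.sum_const, Finset.card_univ, Fintype.card_fun, Fintype.card_bool, Fintype.card_fin,
        nsmul_eq_mul]
      push_cast
      ring
    have hδ1' : (1:ℝ) - δ ≠ 0 := by linarith
    have hcne : ((1:ℝ)/2^n) ≠ 0 := by positivity
    have ha0 : (0:ℝ) < δ + ((1:ℝ)/2^n)*(1-δ) := by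
      have hcpos : (0:ℝ) < 1/2^n := by positivity
      nlinarith
    have hlogP : Real.logb 2 (((1:ℝ)/2^n) * ((1:ℝ)/2^n) * (1-δ))
        = -(n:ℝ) + -(n:ℝ) + Real.logb 2 (1-δ) := by
      rw [Real.logb_mul (by positivity) hδ1', Real.logb_mul hcne hcne, hlogc]
    have hlogPD : Real.logb 2 (((1:ℝ)/2^n) * ((1:ℝ)/2^n) * (1-δ) + ((1:ℝ)/2^n) * δ)
        = -(n:ℝ) + Real.logb 2 (δ + ((1:ℝ)/2^n)*(1-δ)) := by
      rw [show ((1:ℝ)/2^n) * ((1:ℝ)/2^n) * (1-δ) + ((1:ℝ)/2^n) * δ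
          = ((1:ℝ)/2^n) * (δ + ((1:ℝ)/2^n)*(1-δ)) by ring]
      rw [Real.logb_mul hcne ha0.ne', hlogc]
    have h1N : (1:ℝ) ≤ 2^n := by exact_mod_cast Nat.one_le_two_pow (n := n)
    have hc1 : ((1:ℝ)/2^n) ≤ 1 := by
      rw [div_le_one (by positivity)]; exact h1N
    have hMI : ent μ M - (ent μ (fun ω => (M ω, ω.1)) - ent μ (fun ω => ω.1))
        = (δ + ((1:ℝ)/2^n)*(1-δ))*(n:ℝ)
          + (δ + ((1:ℝ)/2^n)*(1-δ)) * Real.logb 2 (δ + ((1:ℝ)/2^n)*(1-δ))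
          + (1-δ)*(1-((1:ℝ)/2^n)) * Real.logb 2 (1-δ) := by
      rw [hentM, hentX, hentMX, hlogP, hlogPD]
      field_simp
      ring
    rw [ge_iff_le]
    simp only [mutualInfo, condEnt]
    rw [hMI]
    exact key_ineq n δ ((1:ℝ)/2^n) hδ0 hδ1 (by positivity) hc1
end
end
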